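/- For all positive reals u, v, w, the inequality 1/(u(1 + v)) + 1/(v(1 + w)) + 1/(w(1 + u)) ≥ 3 / ( (uvw)^{1/3} · (1 + (uvw)^{1/3}) ) holds. -/

import Mathlib

private lemma cauchy3 (p1 p2 p3 q1 q2 q3 : ℝ) (h1 : 0 < q1) (h2 : 0 < q2) (h3 : 0 < q3) :
    (p1 + p2 + p3) ^ 2 / (q1 + q2 + q3) ≤ p1 ^ 2 / q1 + p2 ^ 2 / q2 + p3 ^ 2 / q3 := by
  rw [div_add_div _ _ (ne_of_gt h1) (ne_of_gt h2),
    div_add_div _ _ (by positivity) (ne_of_gt h3),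
    div_le_div_iff₀ (by positivity) (by positivity)]
  nlinarith [sq_nonneg (p1 * q2 - p2 * q1), sq_nonneg (p1 * q3 - p3 * q1),
    sq_nonneg (p2 * q3 - p3 * q2), mul_pos h1 h2, mul_pos h2 h3, mul_pos h1 h3,
    mul_nonneg (mul_nonneg h3.le h3.le) (sq_nonneg (p1 * q2 - p2 * q1)),
    mul_nonneg (mul_nonneg h2.le h2.le) (sq_nonneg (p1 * q3 - p3 * q1)),
    mul_nonneg (mul_nonneg h1.le h1.le) (sq_nonneg (p2 * q3 - p3 * q2)),
    mul_nonneg h3.le (sq_nonneg (p1 * q2 - p2 * q1)),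
    mul_nonneg h2.le (sq_nonneg (p1 * q3 - p3 * q1)),
    mul_nonneg h1.le (sq_nonneg (p2 * q3 - p3 * q2))]

private lemma key (t x y z : ℝ) (ht : 0 < t) (hx : 0 < x) (hy : 0 < y) (hz : 0 < z) :
    1 / ((t * x / y) * (1 + t * y / z)) + 1 / ((t * y / z) * (1 + t * z / x)) +
      1 / ((t * z / x) * (1 + t * x / y)) ≥ 3 / (t * (1 + t)) := by
  have hA : 0 < z + t * y := by positivity
  have hB : 0 < x + t * z := by positivity
  have hC : 0 < y + t * x := by positivity
  have e1 : 1 / ((t * x / y) * (1 + t * y / z)) = (y * z) ^ 2 / (t * (x * y * z * (z + t * y))) := by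
    field_simp
  have e2 : 1 / ((t * y / z) * (1 + t * z / x)) = (z * x) ^ 2 / (t * (x * y * z * (x + t * z))) := by
    field_simp
  have e3 : 1 / ((t * z / x) * (1 + t * x / y)) = (x * y) ^ 2 / (t * (x * y * z * (y + t * x))) := by
    field_simp
  rw [e1, e2, e3, ge_iff_le]
  have hc := cauchy3 (y * z) (z * x) (x * y)
      (t * (x * y * z * (z + t * y))) (t * (x * y * z * (x + t * z)))
      (t * (x * y * z * (y + t * x))) (by positivity) (by positivity) (by positivity)
  refine le_trans ?_ hc
  rw [div_le_div_iff₀ (by positivity) (by positivity)]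
  have key2 : 3 * (x * y * z) * (x + y + z) ≤ (y * z + z * x + x * y) ^ 2 := by
    nlinarith [sq_nonneg (x * y - y * z), sq_nonneg (y * z - z * x), sq_nonneg (z * x - x * y)]
  nlinarith [mul_lt_mul_of_pos_left (mul_pos (mul_pos hx hy) hz) ht,
    mul_le_mul_of_nonneg_left key2 (mul_nonneg (mul_nonneg ht.le ht.le)
      (mul_nonneg (add_pos (mul_pos hx hy) ht).le (by positivity : (0:ℝ) ≤ 1 + t)))]

theorem mavlo_georgiev_sharp_uvw (u v w : ℝ) (hu : 0 < u) (hv : 0 < v) (hw : 0 < w) :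
    1 / (u * (1 + v)) + 1 / (v * (1 + w)) + 1 / (w * (1 + u)) ≥
      3 / ((u * v * w) ^ ((1 : ℝ) / 3) * (1 + (u * v * w) ^ ((1 : ℝ) / 3))) := by
  set t : ℝ := (u * v * w) ^ ((1 : ℝ) / 3) with htdef
  have huvw : 0 < u * v * w := by positivity
  have ht : 0 < t := Real.rpow_pos_of_pos huvw _
  have ht3 : t ^ 3 = u * v * w := by
    rw [htdef, ← Real.rpow_natCast ((u * v * w) ^ ((1:ℝ)/3)) 3, ← Real.rpow_mul huvw.le]
    norm_num
  have hk := key t 1 (t / u) (t ^ 2 / (u * v)) ht one_pos (by positivity) (by positivity)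
  have eu : t * 1 / (t / u) = u := by field_simp
  have ev : t * (t / u) / (t ^ 2 / (u * v)) = v := by field_simp
  have ew : t * (t ^ 2 / (u * v)) / 1 = w := by
    field_simp
    nlinarith [ht3]
  rw [eu, ev, ew] at hk
  exact hk
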